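/- arXiv:2104.14832 — 6 statements merged into one kernel-verified Lean document; each statement's English description precedes it below -/
import Mathlib

section
/- Let U₁, …, U_E : H → H be strictly quasi-nonexpansive operators with ⋂_t Fix U_t ≠ ∅, weights ω_t > 0 with Σ ω_t = 1, and T = Σ_t ω_t U_t. Then for every z ∈ ⋂_t Fix U_t and every x with U_t x ≠ x for some t, ⟨z − x, T x − x⟩ > (1/2) Σ_t ω_t ‖U_t x − x‖². -/
open scoped RealInnerProductSpace

theorem average_inner_lower_bound
    {H : Type*} [NormedAddCommGroup H] [InnerProductSpace ℝ H] [CompleteSpace H]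
    {E : ℕ} (U : Fin E → H → H) (ω : Fin E → ℝ)
    (hω : ∀ t, 0 < ω t) (hωsum : ∑ t, ω t = 1)
    (hC : ∃ z, ∀ t, U t z = z)
    (hsqne : ∀ t x, U t x ≠ x → ∀ z, U t z = z → ‖U t x - z‖ < ‖x - z‖)
    (T : H → H) (hT : ∀ x, T x = ∑ t, ω t • U t x) :
    ∀ z, (∀ t, U t z = z) → ∀ x, (∃ t, U t x ≠ x) →
      (1/2) * ∑ t, ω t * ‖U t x - x‖^2 < ⟪z - x, T x - x⟫ := by
  intro z hz x ⟨t0, ht0⟩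
  have key : ∀ t, U t x ≠ x → ‖U t x - x‖^2 < 2 * ⟪z - x, U t x - x⟫ := by
    intro t ht
    have h := hsqne t x ht z (hz t)
    have h2 : ‖U t x - z‖^2 < ‖x - z‖^2 :=
      pow_lt_pow_left₀ h (norm_nonneg _) (by norm_num)
    have e1 : U t x - z = (U t x - x) + (x - z) := by abel
    rw [e1, norm_add_sq_real] at h2
    have e2 : ⟪U t x - x, x - z⟫ = - ⟪z - x, U t x - x⟫ := by
      rw [real_inner_comm]
      have : x - z = -(z - x) := by abel
      rw [this, inner_neg_left]
    rw [e2] at h2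
    nlinarith
  have hinner : ⟪z - x, T x - x⟫ = ∑ t, ω t * ⟪z - x, U t x - x⟫ := by
    have : T x - x = ∑ t, ω t • (U t x - x) := by
      rw [hT]
      simp only [smul_sub]
      rw [Finset.sum_sub_distrib, ← Finset.sum_smul, hωsum, one_smul]
    rw [this, inner_sum]
    simp [real_inner_smul_right]
  rw [hinner, Finset.mul_sum]
  apply Finset.sum_lt_sum
  · intro t _
    by_cases ht : U t x = x
    · simp [ht]
    · have := key t ht
      have hωt := (hω t).le
      nlinarith
  · exact ⟨t0, Finset.mem_univ _, by nlinarith [key t0 ht0, hω t0]⟩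
end

section
/- With T = Σ_t ω_t U_t an average of strictly quasi-nonexpansive operators U_t having a common fixed point, and step size σ(x) satisfying 0 < σ(x) ≤ (Σ_t ω_t ‖U_t x − x‖²)/‖T x − x‖² for x ∉ Fix T, the generalized relaxation T_σ(x) = x + σ(x)(T x − x) is strictly quasi-nonexpansive. -/
open scoped RealInnerProductSpace

theorem generalized_relaxation_sQNE
    {H : Type*} [NormedAddCommGroup H] [InnerProductSpace ℝ H] [CompleteSpace H]
    {E : ℕ} (U : Fin E → H → H) (ω : Fin E → ℝ)
    (hω : ∀ t, 0 < ω t) (hωsum : ∑ t, ω t = 1)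
    (hC : ∃ z, ∀ t, U t z = z)
    (hsqne : ∀ t x, U t x ≠ x → ∀ z, U t z = z → ‖U t x - z‖ < ‖x - z‖)
    (T : H → H) (hT : ∀ x, T x = ∑ t, ω t • U t x)
    (σ : H → ℝ)
    (hσ : ∀ x, T x ≠ x → 0 < σ x ∧
        σ x ≤ (∑ t, ω t * ‖U t x - x‖^2) / ‖T x - x‖^2)
    (Tσ : H → H) (hTσ : ∀ x, Tσ x = x + σ x • (T x - x)) :
    ∀ x, T x ≠ x → ∀ z, (∀ t, U t z = z) → ‖Tσ x - z‖ < ‖x - z‖ := by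
  intro x hTx z hz
  obtain ⟨hσ0, hσle⟩ := hσ x hTx
  set a : H := x - z with ha
  set v : H := T x - x with hv
  have hvne : v ≠ 0 := sub_ne_zero.mpr hTx
  have hvnorm : (0:ℝ) < ‖v‖ ^ 2 := pow_pos (norm_pos_iff.mpr hvne) 2
  -- v = Σ ω t • (U t x - x)
  have hvsum : v = ∑ t, ω t • (U t x - x) := by
    simp only [smul_sub, Finset.sum_sub_distrib, ← Finset.sum_smul, hωsum, one_smul]
    rw [hv, hT x]
  -- exists t0 with U t0 x ≠ x
  have hex : ∃ t0, U t0 x ≠ x := by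
    by_contra h
    push_neg at h
    apply hTx
    rw [hT x]
    simp only [h, ← Finset.sum_smul, hωsum, one_smul]
  obtain ⟨t0, ht0⟩ := hex
  -- per-term identity
  have hid : ∀ t, 2 * ⟪U t x - x, a⟫ = ‖U t x - z‖^2 - ‖a‖^2 - ‖U t x - x‖^2 := by
    intro t
    have : U t x - z = a + (U t x - x) := by rw [ha]; abel
    rw [this, @norm_add_sq_real, real_inner_comm]
    ring
  -- strict inner product bound
  have hinner : 2 * ⟪v, a⟫ < - ∑ t, ω t * ‖U t x - x‖^2 := by
    have hva : ⟪v, a⟫ = ∑ t, ω t * ⟪U t x - x, a⟫ := by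
      rw [hvsum, sum_inner]
      simp [real_inner_smul_left]
    rw [hva, Finset.mul_sum, ← Finset.sum_neg_distrib]
    apply Finset.sum_lt_sum
    · intro t _
      have h1 : ‖U t x - z‖ ≤ ‖x - z‖ := by
        by_cases h : U t x = x
        · rw [h]
        · exact le_of_lt (hsqne t x h z (hz t))
      have h2 : ‖U t x - z‖^2 - ‖a‖^2 ≤ 0 := by
        have := pow_le_pow_left₀ (norm_nonneg _) h1 2
        rw [ha]; linarith
      have := hid t
      nlinarith [(hω t).le]
    · refine ⟨t0, Finset.mem_univ t0, ?_⟩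
      have h1 : ‖U t0 x - z‖ < ‖x - z‖ := hsqne t0 x ht0 z (hz t0)
      have h2 : ‖U t0 x - z‖^2 - ‖a‖^2 < 0 := by
        have := pow_lt_pow_left₀ h1 (norm_nonneg _) two_ne_zero
        rw [ha]; linarith
      have := hid t0
      nlinarith [hω t0]
  -- σ x * ‖v‖^2 ≤ sum
  have hσv : σ x * ‖v‖^2 ≤ ∑ t, ω t * ‖U t x - x‖^2 := by
    calc σ x * ‖v‖^2 ≤ ((∑ t, ω t * ‖U t x - x‖^2) / ‖v‖^2) * ‖v‖^2 :=
          mul_le_mul_of_nonneg_right hσle hvnorm.le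
      _ = ∑ t, ω t * ‖U t x - x‖^2 := div_mul_cancel₀ _ hvnorm.ne'
  -- expand
  have hexp : ‖Tσ x - z‖^2 = ‖a‖^2 + σ x * (2 * ⟪v, a⟫ + σ x * ‖v‖^2) := by
    have : Tσ x - z = a + σ x • v := by rw [hTσ x, ha]; abel
    rw [this, @norm_add_sq_real, real_inner_smul_right, norm_smul]
    rw [real_inner_comm]
    simp [mul_pow, Real.norm_eq_abs, sq_abs]
    ring
  have hlt : ‖Tσ x - z‖^2 < ‖x - z‖^2 := by
    rw [hexp, ha]
    nlinarith [hσ0]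
  exact lt_of_pow_lt_pow_left₀ 2 (norm_nonneg _) hlt
end

section
/- Let T : H → H be strictly quasi-nonexpansive with Fix T ≠ ∅, σ = σ_max the step size of the averaged operator (with σ(x) ≥ 1 and T_σ strictly quasi-nonexpansive), and λ_k ∈ [ε, 1−ε] for ε ∈ (0,1/2). Then the sequence x^{k+1} = x^k + λ_k σ(x^k)(T x^k − x^k) is Fejér monotone with respect to Fix T: ‖x^{k+1} − z‖ ≤ ‖x^k − z‖ for every z ∈ Fix T. -/
open Finset

theorem algorithm_fejer_monotone
    {H : Type*} [NormedAddCommGroup H] [InnerProductSpace ℝ H] [CompleteSpace H]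
    {E : ℕ} (U : Fin E → H → H) (ω : Fin E → ℝ)
    (hω : ∀ t, 0 < ω t) (hωsum : ∑ t, ω t = 1)
    (hC : ∃ z, ∀ t, U t z = z)
    (hsqne : ∀ t x, U t x ≠ x → ∀ z, U t z = z → ‖U t x - z‖ < ‖x - z‖)
    (T : H → H) (hT : ∀ x, T x = ∑ t, ω t • U t x)
    (σ : H → ℝ)
    (hσ1 : ∀ x, T x ≠ x → σ x = (∑ t, ω t * ‖U t x - x‖^2) / ‖T x - x‖^2)
    (hσ2 : ∀ x, T x = x → σ x = 1)
    (ε : ℝ) (hε : ε ∈ Set.Ioo (0:ℝ) (1/2))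
    (lam : ℕ → ℝ) (hlam : ∀ k, lam k ∈ Set.Icc ε (1 - ε))
    (x : ℕ → H)
    (hx : ∀ k, x (k+1) = x k + (lam k * σ (x k)) • (T (x k) - x k)) :
    ∀ z, T z = z → ∀ k, ‖x (k+1) - z‖ ≤ ‖x k - z‖ := by
  obtain ⟨z₀, hz₀⟩ := hC
  have qne : ∀ t (y w : H), U t w = w → ‖U t y - w‖ ≤ ‖y - w‖ := by
    intro t y w hw
    by_cases h : U t y = y
    · rw [h]
    · exact le_of_lt (hsqne t y h w hw)
  have fixU : ∀ z, T z = z → ∀ t, U t z = z := by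
    intro z hz
    by_contra hcon
    push_neg at hcon
    obtain ⟨t₀, ht₀⟩ := hcon
    have h1 : z - z₀ = ∑ t, ω t • (U t z - z₀) := by
      have hs : (∑ t, ω t • (z₀:H)) = z₀ := by
        rw [← Finset.sum_smul, hωsum, one_smul]
      calc z - z₀ = T z - z₀ := by rw [hz]
        _ = (∑ t, ω t • U t z) - ∑ t, ω t • (z₀:H) := by rw [hT, hs]
        _ = ∑ t, ω t • (U t z - z₀) := by
            rw [← Finset.sum_sub_distrib]
            exact Finset.sum_congr rfl fun t _ => (smul_sub _ _ _).symm
    have h2 : ‖z - z₀‖ < ‖z - z₀‖ := by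
      calc ‖z - z₀‖ = ‖∑ t, ω t • (U t z - z₀)‖ := by rw [← h1]
        _ ≤ ∑ t, ‖ω t • (U t z - z₀)‖ := norm_sum_le _ _
        _ = ∑ t, ω t * ‖U t z - z₀‖ := by
            refine Finset.sum_congr rfl fun t _ => ?_
            rw [norm_smul, Real.norm_eq_abs, abs_of_pos (hω t)]
        _ < ∑ t, ω t * ‖z - z₀‖ := by
            apply Finset.sum_lt_sum
            · intro t _
              exact mul_le_mul_of_nonneg_left (qne t z z₀ (hz₀ t)) (hω t).le
            · exact ⟨t₀, Finset.mem_univ t₀,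
                mul_lt_mul_of_pos_left (hsqne t₀ z ht₀ z₀ (hz₀ t₀)) (hω t₀)⟩
        _ = ‖z - z₀‖ := by rw [← Finset.sum_mul, hωsum, one_mul]
    exact lt_irrefl _ h2
  intro z hz k
  have hUz := fixU z hz
  set y := x k with hy
  by_cases hTy : T y = y
  · rw [hx k, ← hy, hTy]; simp
  · -- main case
    set L := lam k with hL
    have hL0 : 0 < L := lt_of_lt_of_le hε.1 (hlam k).1
    have hL1 : L < 1 := lt_of_le_of_lt (hlam k).2 (by linarith [hε.1])
    set S := ∑ t, ω t * ‖U t y - y‖^2 with hS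
    have hSnn : 0 ≤ S := Finset.sum_nonneg fun t _ =>
      mul_nonneg (hω t).le (sq_nonneg _)
    have hTy2 : 0 < ‖T y - y‖^2 := by
      have h0 : T y - y ≠ 0 := sub_ne_zero.mpr hTy
      have := norm_pos_iff.mpr h0
      positivity
    have hσ : σ y = S / ‖T y - y‖^2 := hσ1 y hTy
    have hσnn : 0 ≤ σ y := by rw [hσ]; exact div_nonneg hSnn hTy2.le
    have hσS : σ y * ‖T y - y‖^2 = S := by
      rw [hσ]; exact div_mul_cancel₀ S hTy2.ne'
    -- inner product bound per operator
    have key : ∀ t, ‖U t y - y‖^2 ≤ 2 * inner ℝ (y - U t y) (y - z) := by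
      intro t
      have hid : ‖(y - z) - (y - U t y)‖^2
          = ‖y - z‖^2 - 2 * inner ℝ (y - z) (y - U t y) + ‖y - U t y‖^2 :=
        @norm_sub_sq_real H _ _ (y - z) (y - U t y)
      have hsimp : (y - z) - (y - U t y) = U t y - z := by abel
      rw [hsimp] at hid
      have hle : ‖U t y - z‖^2 ≤ ‖y - z‖^2 := by
        have := qne t y z (hUz t)
        exact pow_le_pow_left₀ (norm_nonneg _) this 2
      have hrev : ‖y - U t y‖^2 = ‖U t y - y‖^2 := by rw [norm_sub_rev]
      have hcomm : (inner ℝ (y - z) (y - U t y) : ℝ) = inner ℝ (y - U t y) (y - z) :=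
        real_inner_comm _ _
      linarith [hid, hle, hrev, hcomm]
    have hyT : y - T y = ∑ t, ω t • (y - U t y) := by
      have hs : (∑ t, ω t • y) = y := by rw [← Finset.sum_smul, hωsum, one_smul]
      calc y - T y = (∑ t, ω t • y) - ∑ t, ω t • U t y := by rw [hT, hs]
        _ = ∑ t, ω t • (y - U t y) := by
            rw [← Finset.sum_sub_distrib]
            exact Finset.sum_congr rfl fun t _ => (smul_sub _ _ _).symm
    have hinner : S ≤ 2 * inner ℝ (y - T y) (y - z) := by
      rw [hyT, sum_inner]
      have : ∀ t ∈ Finset.univ, (inner ℝ (ω t • (y - U t y)) (y - z) : ℝ)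
          = ω t * inner ℝ (y - U t y) (y - z) := fun t _ =>
        real_inner_smul_left _ _ _
      rw [Finset.sum_congr rfl this, Finset.mul_sum]
      apply Finset.sum_le_sum
      intro t _
      have h := mul_le_mul_of_nonneg_left (key t) (hω t).le
      linarith [h]
    -- expand the norm
    have hexp : ‖x (k+1) - z‖^2
        = ‖y - z‖^2 - 2 * (L * σ y) * inner ℝ (y - T y) (y - z)
          + (L * σ y)^2 * ‖T y - y‖^2 := by
      have h1 : x (k+1) - z = (y - z) + (L * σ y) • (T y - y) := by
        rw [hx k, ← hy]; abel
      have hin : (inner ℝ (y - z) (T y - y) : ℝ) = - inner ℝ (y - T y) (y - z) := by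
        rw [real_inner_comm, show T y - y = -(y - T y) from by abel, inner_neg_left]
      rw [h1, @norm_add_sq_real H _ _ (y - z) ((L * σ y) • (T y - y)),
        real_inner_smul_right, norm_smul, mul_pow, hin, Real.norm_eq_abs, sq_abs]
      ring
    have hfin : ‖x (k+1) - z‖^2 ≤ ‖y - z‖^2 := by
      have hcnn : 0 ≤ L * σ y := mul_nonneg hL0.le hσnn
      have hstep : ‖x (k+1) - z‖^2
          ≤ ‖y - z‖^2 - (L * σ y) * S + (L * σ y)^2 * ‖T y - y‖^2 := by
        rw [hexp]
        nlinarith [hinner, hcnn]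
      have : (L * σ y) * S = L * (σ y)^2 * ‖T y - y‖^2 := by
        rw [← hσS]; ring
      rw [this] at hstep
      have h2 : L^2 ≤ L := by nlinarith
      have h3 := mul_le_mul_of_nonneg_right h2
        (mul_nonneg (sq_nonneg (σ y)) hTy2.le)
      have h4 : (L * σ y)^2 * ‖T y - y‖^2 ≤ L * σ y^2 * ‖T y - y‖^2 := by
        calc (L * σ y)^2 * ‖T y - y‖^2 = L^2 * (σ y^2 * ‖T y - y‖^2) := by ring
          _ ≤ L * (σ y^2 * ‖T y - y‖^2) := h3
          _ = L * σ y^2 * ‖T y - y‖^2 := by ring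
      linarith
    nlinarith [hfin, norm_nonneg (x (k+1) - z), norm_nonneg (y - z)]
end

section
/- Under the assumptions of the string-averaging algorithm (T = Σ_t ω_t U_t with U_t sQNE, common fixed point z, σ = σ_max, λ_k ∈ [ε, 1−ε]), the iterates satisfy ‖x^{k+1} − z‖² ≤ ‖x^k − z‖² − λ_k(1−λ_k)‖T x^k − x^k‖² for every z ∈ Fix T and every k with x^k ∉ Fix T. -/
open RealInnerProductSpace


theorem algorithm_step_inequality
    {H : Type*} [NormedAddCommGroup H] [InnerProductSpace ℝ H] [CompleteSpace H]
    {E : ℕ} (U : Fin E → H → H) (ω : Fin E → ℝ)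
    (hω : ∀ t, 0 < ω t) (hωsum : ∑ t, ω t = 1)
    (hC : ∃ z, ∀ t, U t z = z)
    (hsqne : ∀ t x, U t x ≠ x → ∀ z, U t z = z → ‖U t x - z‖ < ‖x - z‖)
    (T : H → H) (hT : ∀ x, T x = ∑ t, ω t • U t x)
    (σ : H → ℝ)
    (hσ1 : ∀ x, T x ≠ x → σ x = (∑ t, ω t * ‖U t x - x‖^2) / ‖T x - x‖^2)
    (hσ2 : ∀ x, T x = x → σ x = 1)
    (ε : ℝ) (hε : ε ∈ Set.Ioo (0:ℝ) (1/2))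
    (lam : ℕ → ℝ) (hlam : ∀ k, lam k ∈ Set.Icc ε (1 - ε))
    (x : ℕ → H)
    (hx : ∀ k, x (k+1) = x k + (lam k * σ (x k)) • (T (x k) - x k)) :
    ∀ z, T z = z → ∀ k, T (x k) ≠ x k →
      ‖x (k+1) - z‖^2 ≤ ‖x k - z‖^2 - lam k * (1 - lam k) * ‖T (x k) - x k‖^2 := by
  obtain ⟨hε0, hε2⟩ := hε
  -- T u - u as a weighted sum
  have hTsub : ∀ u : H, T u - u = ∑ t, ω t • (U t u - u) := by
    intro u
    simp_rw [smul_sub]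
    rw [Finset.sum_sub_distrib, ← Finset.sum_smul, hωsum, one_smul, hT]
  have hsumInner : ∀ (u c : H), ∑ t, ω t * ⟪U t u - u, u - c⟫ = ⟪T u - u, u - c⟫ := by
    intro u c
    rw [hTsub u, sum_inner]
    simp_rw [real_inner_smul_left]
  -- quadratic inequality from strict norm decrease
  have quad : ∀ (p u c : H), ‖p - c‖ < ‖u - c‖ → ⟪p - u, u - c⟫ < -‖p - u‖^2/2 := by
    intro p u c h
    have h2 : ‖p - c‖^2 < ‖u - c‖^2 := by
      nlinarith [norm_nonneg (p - c), norm_nonneg (u - c)]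
    have h3 : p - c = (u - c) + (p - u) := by abel
    have h4 : ‖p - c‖^2 = ‖u - c‖^2 + 2*⟪u - c, p - u⟫ + ‖p - u‖^2 := by
      rw [h3, norm_add_sq_real]
    rw [real_inner_comm]
    linarith
  have termle : ∀ (t) (u c : H), U t c = c → ⟪U t u - u, u - c⟫ ≤ -‖U t u - u‖^2/2 := by
    intro t u c hc
    by_cases h : U t u = u
    · simp [h]
    · exact (quad (U t u) u c (hsqne t u h c hc)).le
  intro z hz k hk
  -- z is a common fixed point of all U t
  have hUz : ∀ t, U t z = z := by
    obtain ⟨w, hw⟩ := hC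
    by_contra hcon
    push_neg at hcon
    obtain ⟨t0, ht0⟩ := hcon
    have hzero : ∑ t, ω t * ⟪U t z - z, z - w⟫ = 0 := by
      rw [hsumInner z w, hz, sub_self, inner_zero_left]
    have hlt : ∑ t, ω t * ⟪U t z - z, z - w⟫ <
        ∑ t, ω t * (-‖U t z - z‖^2/2) := by
      apply Finset.sum_lt_sum
      · intro t _
        exact mul_le_mul_of_nonneg_left (termle t z w (hw t)) (hω t).le
      · exact ⟨t0, Finset.mem_univ t0,
          mul_lt_mul_of_pos_left (quad (U t0 z) z w (hsqne t0 z ht0 w (hw t0))) (hω t0)⟩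
    have hnp : ∑ t, ω t * (-‖U t z - z‖^2/2) ≤ 0 := by
      apply Finset.sum_nonpos
      intro t _
      have : (0:ℝ) ≤ ‖U t z - z‖^2 := sq_nonneg _
      nlinarith [(hω t).le]
    linarith
  set y := x k with hy
  set L := lam k with hL
  obtain ⟨hLl, hLu⟩ := hlam k
  have hL0 : 0 < L := lt_of_lt_of_le hε0 hLl
  have hL1 : L < 1 := by linarith
  set A := ∑ t, ω t * ‖U t y - y‖^2 with hA
  set D := ‖T y - y‖^2 with hD
  have hD0 : 0 < D := by
    have h0 : T y - y ≠ 0 := sub_ne_zero_of_ne hk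
    exact pow_pos (norm_pos_iff.2 h0) 2
  -- inner product inequality
  have hI : ⟪T y - y, y - z⟫ ≤ -A/2 := by
    rw [← hsumInner y z]
    have hsle : ∑ t, ω t * ⟪U t y - y, y - z⟫ ≤ ∑ t, ω t * (-‖U t y - y‖^2/2) :=
      Finset.sum_le_sum fun t _ =>
        mul_le_mul_of_nonneg_left (termle t y z (hUz t)) (hω t).le
    have heq : ∑ t, ω t * (-‖U t y - y‖^2/2) = -A/2 := by
      rw [hA]
      rw [show -(∑ t, ω t * ‖U t y - y‖^2)/2 = ∑ t, -(ω t * ‖U t y - y‖^2)/2 by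
        rw [← Finset.sum_neg_distrib, ← Finset.sum_div]]
      exact Finset.sum_congr rfl fun t _ => by ring
    linarith
  -- D ≤ A via Cauchy-Schwarz
  have hAD : D ≤ A := by
    have hnorm : ‖T y - y‖ ≤ ∑ t, ω t * ‖U t y - y‖ := by
      rw [hTsub y]
      refine le_trans (norm_sum_le _ _) (le_of_eq ?_)
      exact Finset.sum_congr rfl fun t _ => by
        rw [norm_smul, Real.norm_eq_abs, abs_of_pos (hω t)]
    have hcs := Finset.sum_mul_sq_le_sq_mul_sq Finset.univ
      (fun t => Real.sqrt (ω t)) (fun t => Real.sqrt (ω t) * ‖U t y - y‖)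
    have e1 : ∀ t : Fin E, Real.sqrt (ω t) * (Real.sqrt (ω t) * ‖U t y - y‖)
        = ω t * ‖U t y - y‖ := fun t => by
      rw [← mul_assoc, Real.mul_self_sqrt (hω t).le]
    have e2 : ∀ t : Fin E, (Real.sqrt (ω t))^2 = ω t := fun t => Real.sq_sqrt (hω t).le
    have e3 : ∀ t : Fin E, (Real.sqrt (ω t) * ‖U t y - y‖)^2
        = ω t * ‖U t y - y‖^2 := fun t => by rw [mul_pow, e2]
    simp only [e1, e2, e3] at hcs
    rw [hωsum, one_mul] at hcs
    have h1 : ‖T y - y‖^2 ≤ (∑ t, ω t * ‖U t y - y‖)^2 := by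
      apply pow_le_pow_left₀ (norm_nonneg _) hnorm
    exact le_trans h1 hcs
  set s := σ y with hs
  have hσval : s = A / D := hσ1 y hk
  have hsD : s * D = A := by
    rw [hσval, div_mul_cancel₀ _ hD0.ne']
  have hs1 : 1 ≤ s := by
    rw [hσval]
    exact (one_le_div hD0).2 hAD
  have hLs0 : 0 ≤ L * s := mul_nonneg hL0.le (by linarith)
  -- expansion of the step
  have hexp : ‖x (k+1) - z‖^2
      = ‖y - z‖^2 + 2*(L*s)*⟪y - z, T y - y⟫ + (L*s)^2 * D := by
    rw [hx k, ← hy, ← hL, ← hs, add_sub_right_comm, norm_add_sq_real,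
      real_inner_smul_right, norm_smul, Real.norm_eq_abs, mul_pow, sq_abs]
    ring
  rw [hexp]
  have hI2 : 2 * ⟪y - z, T y - y⟫ ≤ -(s*D) := by
    rw [real_inner_comm, hsD]; linarith
  have step1 := mul_le_mul_of_nonneg_left hI2 hLs0
  have p : 0 ≤ L * (1 - L) * D * (s^2 - 1) := by
    have : (1:ℝ) ≤ s^2 := by nlinarith
    have h1 : 0 ≤ L * (1 - L) * D := by
      apply mul_nonneg (mul_nonneg hL0.le (by linarith)) hD0.le
    nlinarith
  nlinarith [step1, p]
end

section
/- Under the assumptions of the string-averaging algorithm with σ = σ_max and λ_k ∈ [ε, 1−ε], the iterates satisfy the strict block inequality ‖x^{k+1} − z‖² < ‖x^k − z‖² − λ_k(1−λ_k) Σ_t ω_t ‖U_t x^k − x^k‖² whenever x^k ∉ Fix T; consequently ‖U_t x^k − x^k‖ → 0 as k → ∞ for every t. -/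
open Finset Filter

private lemma key_arith (n r ip l e : ℝ) (h1 : 2*ip < -(r*n)) (hr : 1 ≤ r) (h3 : 0 < n)
    (h4 : e ≤ l) (h5 : l ≤ 1 - e) (h6 : 0 < e) :
    2 * (l * r) * ip + (l * r)^2 * n < - (l*(1-l)*(r*n)) := by
  have hl : 0 < l := h6.trans_le h4
  have hl1 : 0 < 1 - l := lt_of_lt_of_le h6 (by linarith)
  have hrpos : 0 < r := lt_of_lt_of_le one_pos hr
  have hlr : 0 < l * r := mul_pos hl hrpos
  have h1' : (l*r) * (2*ip) < (l*r) * (-(r*n)) := mul_lt_mul_of_pos_left h1 hlr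
  nlinarith [mul_nonneg (mul_nonneg (mul_nonneg (mul_nonneg hl.le hl1.le) hrpos.le) h3.le)
      (sub_nonneg.mpr hr)]

theorem algorithm_strict_block_inequality
    {H : Type*} [NormedAddCommGroup H] [InnerProductSpace ℝ H] [CompleteSpace H]
    {E : ℕ} (U : Fin E → H → H) (ω : Fin E → ℝ)
    (hω : ∀ t, 0 < ω t) (hωsum : ∑ t, ω t = 1)
    (hC : ∃ z, ∀ t, U t z = z)
    (hsqne : ∀ t x, U t x ≠ x → ∀ z, U t z = z → ‖U t x - z‖ < ‖x - z‖)
    (T : H → H) (hT : ∀ x, T x = ∑ t, ω t • U t x)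
    (σ : H → ℝ)
    (hσ1 : ∀ x, T x ≠ x → σ x = (∑ t, ω t * ‖U t x - x‖^2) / ‖T x - x‖^2)
    (hσ2 : ∀ x, T x = x → σ x = 1)
    (ε : ℝ) (hε : ε ∈ Set.Ioo (0:ℝ) (1/2))
    (lam : ℕ → ℝ) (hlam : ∀ k, lam k ∈ Set.Icc ε (1 - ε))
    (x : ℕ → H)
    (hx : ∀ k, x (k+1) = x k + (lam k * σ (x k)) • (T (x k) - x k)) :
    (∀ z, T z = z → ∀ k, T (x k) ≠ x k →
      ‖x (k+1) - z‖^2 <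
        ‖x k - z‖^2 - lam k * (1 - lam k) * ∑ t, ω t * ‖U t (x k) - x k‖^2) ∧
    (∀ t, Filter.Tendsto (fun k => ‖U t (x k) - x k‖) Filter.atTop (nhds 0)) := by
  obtain ⟨εpos, εlt⟩ := hε
  obtain ⟨z0, hz0⟩ := hC
  -- T y - c = ∑ ω t • (U t y - c)
  have hTgen : ∀ y c : H, T y - c = ∑ t, ω t • (U t y - c) := by
    intro y c
    rw [hT]
    simp [smul_sub, Finset.sum_sub_distrib, ← Finset.sum_smul, hωsum]
  -- non-strict quasi-nonexpansiveness
  have quasi : ∀ t (y z : H), U t z = z → ‖U t y - z‖ ≤ ‖y - z‖ := by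
    intro t y z hz
    by_cases h : U t y = y
    · rw [h]
    · exact (hsqne t y h z hz).le
  -- Fix T ⊆ common fixed points
  have fixT : ∀ z, T z = z → ∀ t, U t z = z := by
    intro z hz t
    by_contra hne
    have hstrict : ‖U t z - z0‖ < ‖z - z0‖ := hsqne t z hne z0 (hz0 t)
    have hlt : ‖T z - z0‖ < ‖z - z0‖ := by
      calc ‖T z - z0‖ = ‖∑ s, ω s • (U s z - z0)‖ := by rw [hTgen]
        _ ≤ ∑ s, ‖ω s • (U s z - z0)‖ := norm_sum_le _ _
        _ = ∑ s, ω s * ‖U s z - z0‖ := Finset.sum_congr rfl fun s _ => by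
            rw [norm_smul, Real.norm_eq_abs, abs_of_pos (hω s)]
        _ < ∑ s, ω s * ‖z - z0‖ := Finset.sum_lt_sum
            (fun s _ => mul_le_mul_of_nonneg_left (quasi s z z0 (hz0 s)) (hω s).le)
            ⟨t, Finset.mem_univ t, mul_lt_mul_of_pos_left hstrict (hω t)⟩
        _ = ‖z - z0‖ := by rw [← Finset.sum_mul, hωsum, one_mul]
    rw [hz] at hlt
    exact lt_irrefl _ hlt
  -- per-term inner product inequalities
  have hterm_le : ∀ t (y z : H), U t z = z →
      2 * (inner ℝ (U t y - y) (y - z) : ℝ) ≤ -‖U t y - y‖^2 := by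
    intro t y z hz
    have h : ‖U t y - z‖^2 ≤ ‖y - z‖^2 :=
      pow_le_pow_left₀ (norm_nonneg _) (quasi t y z hz) 2
    have hexp : ‖U t y - z‖^2 =
        ‖U t y - y‖^2 + 2 * (inner ℝ (U t y - y) (y - z) : ℝ) + ‖y - z‖^2 := by
      rw [← sub_add_sub_cancel (U t y) y z, norm_add_sq_real]
    linarith
  have hterm_lt : ∀ t (y z : H), U t z = z → U t y ≠ y →
      2 * (inner ℝ (U t y - y) (y - z) : ℝ) < -‖U t y - y‖^2 := by
    intro t y z hz hne
    have h : ‖U t y - z‖^2 < ‖y - z‖^2 := by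
      have := hsqne t y hne z hz
      exact pow_lt_pow_left₀ this (norm_nonneg _) two_ne_zero
    have hexp : ‖U t y - z‖^2 =
        ‖U t y - y‖^2 + 2 * (inner ℝ (U t y - y) (y - z) : ℝ) + ‖y - z‖^2 := by
      rw [← sub_add_sub_cancel (U t y) y z, norm_add_sq_real]
    linarith
  -- inner product of T y - y with y - z as a sum
  have hipsum : ∀ (y z : H), (inner ℝ (T y - y) (y - z) : ℝ)
      = ∑ t, ω t * (inner ℝ (U t y - y) (y - z) : ℝ) := by
    intro y z
    rw [hTgen y y, sum_inner]
    exact Finset.sum_congr rfl fun t _ => real_inner_smul_left _ _ _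
  -- Jensen: ‖T y - y‖² ≤ ∑ ω t ‖U t y - y‖²
  have hjensen : ∀ y : H, ‖T y - y‖^2 ≤ ∑ t, ω t * ‖U t y - y‖^2 := by
    intro y
    have hinner_v : ∑ t, ω t * (inner ℝ (U t y - y) (T y - y) : ℝ) = ‖T y - y‖^2 := by
      have h1 : (inner ℝ (T y - y) (T y - y) : ℝ)
          = ∑ t, ω t * (inner ℝ (U t y - y) (T y - y) : ℝ) := by
        nth_rewrite 1 [hTgen y y]
        rw [sum_inner]
        exact Finset.sum_congr rfl fun t _ => real_inner_smul_left _ _ _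
      rw [← real_inner_self_eq_norm_sq]
      exact h1.symm
    have hkey : (∑ t, ω t * ‖U t y - y‖^2) - ‖T y - y‖^2
        = ∑ t, ω t * ‖U t y - y - (T y - y)‖^2 := by
      have hpt : ∀ t : Fin E, ω t * ‖U t y - y - (T y - y)‖^2
          = ω t * ‖U t y - y‖^2 - 2 * (ω t * (inner ℝ (U t y - y) (T y - y) : ℝ))
            + ω t * ‖T y - y‖^2 := fun t => by
        rw [norm_sub_sq_real]; ring
      rw [Finset.sum_congr rfl fun t _ => hpt t]
      rw [Finset.sum_add_distrib, Finset.sum_sub_distrib, ← Finset.mul_sum, hinner_v,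
        ← Finset.sum_mul, hωsum]
      ring
    have hnn : 0 ≤ ∑ t, ω t * ‖U t y - y - (T y - y)‖^2 :=
      Finset.sum_nonneg fun t _ => mul_nonneg (hω t).le (sq_nonneg _)
    linarith [hkey ▸ hnn]
  -- Part 1
  have part1 : ∀ z, T z = z → ∀ k, T (x k) ≠ x k →
      ‖x (k+1) - z‖^2 <
        ‖x k - z‖^2 - lam k * (1 - lam k) * ∑ t, ω t * ‖U t (x k) - x k‖^2 := by
    intro z hz k hk
    have hzfix : ∀ t, U t z = z := fixT z hz
    set S := ∑ t, ω t * ‖U t (x k) - x k‖^2 with hSdef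
    have ht0 : ∃ t0, U t0 (x k) ≠ x k := by
      by_contra h
      push_neg at h
      apply hk
      rw [hT]
      simp only [h]
      rw [← Finset.sum_smul, hωsum, one_smul]
    obtain ⟨t0, ht0⟩ := ht0
    have hn : 0 < ‖T (x k) - x k‖^2 := by
      have h0 : T (x k) - x k ≠ 0 := sub_ne_zero.mpr hk
      exact pow_pos (norm_pos_iff.mpr h0) 2
    set n := ‖T (x k) - x k‖^2 with hndef
    have hSge : n ≤ S := hjensen (x k)
    have hip : 2 * (inner ℝ (T (x k) - x k) (x k - z) : ℝ) < -S := by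
      have hsumlt : ∑ t, ω t * (2 * (inner ℝ (U t (x k) - x k) (x k - z) : ℝ))
          < ∑ t, ω t * (-‖U t (x k) - x k‖^2) :=
        Finset.sum_lt_sum
          (fun t _ => mul_le_mul_of_nonneg_left (hterm_le t (x k) z (hzfix t)) (hω t).le)
          ⟨t0, Finset.mem_univ t0,
            mul_lt_mul_of_pos_left (hterm_lt t0 (x k) z (hzfix t0) ht0) (hω t0)⟩
      have hL : ∑ t, ω t * (2 * (inner ℝ (U t (x k) - x k) (x k - z) : ℝ))
          = 2 * (inner ℝ (T (x k) - x k) (x k - z) : ℝ) := by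
        rw [hipsum (x k) z, Finset.mul_sum]
        exact Finset.sum_congr rfl fun t _ => by ring
      have hR : ∑ t, ω t * (-‖U t (x k) - x k‖^2) = -S := by
        rw [hSdef, ← Finset.sum_neg_distrib]
        exact Finset.sum_congr rfl fun t _ => by ring
      rw [hL, hR] at hsumlt
      exact hsumlt
    have hσ : σ (x k) = S / n := hσ1 (x k) hk
    have hStep : x (k+1) - z = (x k - z) + (lam k * (S/n)) • (T (x k) - x k) := by
      rw [hx k, hσ]
      abel
    have hexp : ‖x (k+1) - z‖^2 = ‖x k - z‖^2
        + 2 * (lam k * (S/n)) * (inner ℝ (T (x k) - x k) (x k - z) : ℝ)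
        + (lam k * (S/n))^2 * n := by
      rw [hStep, norm_add_sq_real, real_inner_smul_right, norm_smul, real_inner_comm]
      simp only [Real.norm_eq_abs, mul_pow, sq_abs, hndef]
      ring
    have hrn : (S/n) * n = S := div_mul_cancel₀ S hn.ne'
    have hr1 : 1 ≤ S/n := (one_le_div hn).mpr hSge
    obtain ⟨hl1, hl2⟩ := hlam k
    have harith := key_arith n (S/n) (inner ℝ (T (x k) - x k) (x k - z) : ℝ) (lam k) ε
      (by rw [hrn]; exact hip) hr1 hn hl1 hl2 εpos
    rw [hrn] at harith
    linarith [hexp, harith]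
  refine ⟨part1, ?_⟩
  -- Part 2
  have hTz0 : T z0 = z0 := by
    rw [hT]
    simp only [hz0]
    rw [← Finset.sum_smul, hωsum, one_smul]
  set Sk : ℕ → ℝ := fun k => ∑ t, ω t * ‖U t (x k) - x k‖^2 with hSkdef
  have hSk_nonneg : ∀ k, 0 ≤ Sk k := fun k =>
    Finset.sum_nonneg fun t _ => mul_nonneg (hω t).le (sq_nonneg _)
  have hstep2 : ∀ k, ε^2 * Sk k ≤ ‖x k - z0‖^2 - ‖x (k+1) - z0‖^2 := by
    intro k
    by_cases hk : T (x k) = x k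
    · have hfix : ∀ t, U t (x k) = x k := fixT _ hk
      have hSk0 : Sk k = 0 := by simp [hSkdef, hfix]
      have hx1 : x (k+1) = x k := by rw [hx k, hk]; simp
      rw [hSk0, hx1]
      simp
    · have h := part1 z0 hTz0 k hk
      obtain ⟨hl1, hl2⟩ := hlam k
      have hεl : ε^2 ≤ lam k * (1 - lam k) := by nlinarith
      have h2 : ε^2 * Sk k ≤ lam k * (1 - lam k) * Sk k :=
        mul_le_mul_of_nonneg_right hεl (hSk_nonneg k)
      have : lam k * (1 - lam k) * Sk k < ‖x k - z0‖^2 - ‖x (k+1) - z0‖^2 := by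
        linarith [h]
      linarith
  have hsum : ∀ N, ∑ k ∈ Finset.range N, ε^2 * Sk k ≤ ‖x 0 - z0‖^2 := by
    intro N
    calc ∑ k ∈ Finset.range N, ε^2 * Sk k
        ≤ ∑ k ∈ Finset.range N, (‖x k - z0‖^2 - ‖x (k+1) - z0‖^2) :=
          Finset.sum_le_sum fun k _ => hstep2 k
      _ = ‖x 0 - z0‖^2 - ‖x N - z0‖^2 :=
          Finset.sum_range_sub' (fun k => ‖x k - z0‖^2) N
      _ ≤ ‖x 0 - z0‖^2 := by nlinarith [sq_nonneg ‖x N - z0‖]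
  have hsummable : Summable (fun k => ε^2 * Sk k) :=
    summable_of_sum_range_le (fun k => mul_nonneg (sq_nonneg ε) (hSk_nonneg k)) hsum
  have htend0 : Tendsto (fun k => ε^2 * Sk k) atTop (nhds 0) :=
    hsummable.tendsto_atTop_zero
  have hε2ne : (ε^2 : ℝ) ≠ 0 := by positivity
  have htendS : Tendsto Sk atTop (nhds 0) := by
    have h2 : Tendsto (fun k => (ε^2)⁻¹ * (ε^2 * Sk k)) atTop (nhds ((ε^2)⁻¹ * 0)) :=
      htend0.const_mul _
    simpa [← mul_assoc, inv_mul_cancel₀ hε2ne] using h2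
  intro t
  have hb : ∀ k, ‖U t (x k) - x k‖^2 ≤ Sk k / ω t := by
    intro k
    have hsingle : ω t * ‖U t (x k) - x k‖^2 ≤ Sk k :=
      Finset.single_le_sum (f := fun s => ω s * ‖U s (x k) - x k‖^2)
        (fun s _ => mul_nonneg (hω s).le (sq_nonneg _)) (Finset.mem_univ t)
    rw [le_div_iff₀ (hω t)]
    linarith
  have htdiv : Tendsto (fun k => Sk k / ω t) atTop (nhds 0) := by
    have := htendS.div_const (ω t)
    simpa using this
  have hsq : Tendsto (fun k => ‖U t (x k) - x k‖^2) atTop (nhds 0) :=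
    squeeze_zero (fun k => sq_nonneg _) hb htdiv
  have := hsq.sqrt
  have heq : (fun k => Real.sqrt (‖U t (x k) - x k‖^2)) = fun k => ‖U t (x k) - x k‖ :=
    funext fun k => Real.sqrt_sq (norm_nonneg _)
  rw [heq] at this
  simpa using this
end

section
/- Let H be a real Hilbert space, U₁, …, U_E strictly quasi-nonexpansive with C = ⋂_t Fix U_t ≠ ∅, T = Σ ω_t U_t, and suppose each U_t − Id is demi-closed at 0. If λ_k ∈ [ε, 1−ε], then the sequence x^{k+1} = x^k + λ_k σ_max(x^k)(T x^k − x^k) converges weakly to a point of Fix T = C. -/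
open Filter Topology
local notation "⟪" a ", " b "⟫" => @inner ℝ _ _ a b

lemma wc_jensen {H : Type*} [NormedAddCommGroup H] [InnerProductSpace ℝ H]
    {E : ℕ} (ω : Fin E → ℝ) (hω : ∀ t, 0 ≤ ω t) (hωsum : ∑ t, ω t = 1)
    (v : Fin E → H) : ‖∑ t, ω t • v t‖^2 ≤ ∑ t, ω t * ‖v t‖^2 := by
  have h1 : ‖∑ t, ω t • v t‖ ≤ ∑ t, ω t * ‖v t‖ := by
    calc ‖∑ t, ω t • v t‖ ≤ ∑ t, ‖ω t • v t‖ := norm_sum_le _ _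
    _ = ∑ t, ω t * ‖v t‖ := by
        refine Finset.sum_congr rfl fun t _ => ?_
        rw [norm_smul, Real.norm_eq_abs, abs_of_nonneg (hω t)]
  have h2 : (∑ t, ω t * ‖v t‖)^2 ≤ (∑ t, ω t) * ∑ t, ω t * ‖v t‖^2 := by
    have hcs := Finset.sum_mul_sq_le_sq_mul_sq Finset.univ
      (fun t => Real.sqrt (ω t)) (fun t => Real.sqrt (ω t) * ‖v t‖)
    have e1 : ∀ t : Fin E, Real.sqrt (ω t) * (Real.sqrt (ω t) * ‖v t‖) = ω t * ‖v t‖ := by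
      intro t; rw [← mul_assoc, Real.mul_self_sqrt (hω t)]
    have e2 : ∀ t : Fin E, (Real.sqrt (ω t))^2 = ω t := fun t => Real.sq_sqrt (hω t)
    have e3 : ∀ t : Fin E, (Real.sqrt (ω t) * ‖v t‖)^2 = ω t * ‖v t‖^2 := by
      intro t; rw [mul_pow, e2]
    simp only [e1, e2, e3] at hcs
    exact hcs
  calc ‖∑ t, ω t • v t‖^2 ≤ (∑ t, ω t * ‖v t‖)^2 := by
        apply pow_le_pow_left₀ (norm_nonneg _) h1
  _ ≤ (∑ t, ω t) * ∑ t, ω t * ‖v t‖^2 := h2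
  _ = ∑ t, ω t * ‖v t‖^2 := by rw [hωsum, one_mul]

lemma wc_fejer_step
    {H : Type*} [NormedAddCommGroup H] [InnerProductSpace ℝ H]
    {E : ℕ} (U : Fin E → H → H) (ω : Fin E → ℝ)
    (hω : ∀ t, 0 < ω t) (hωsum : ∑ t, ω t = 1)
    (hsqne : ∀ t x, U t x ≠ x → ∀ z, U t z = z → ‖U t x - z‖ < ‖x - z‖)
    (T : H → H) (hT : ∀ x, T x = ∑ t, ω t • U t x)
    (σ : H → ℝ)
    (hσ1 : ∀ x, T x ≠ x → σ x = (∑ t, ω t * ‖U t x - x‖^2) / ‖T x - x‖^2)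
    (ε : ℝ) (hε : ε ∈ Set.Ioo (0:ℝ) (1/2))
    (lam : ℕ → ℝ) (hlam : ∀ k, lam k ∈ Set.Icc ε (1 - ε))
    (x : ℕ → H)
    (hx : ∀ k, x (k+1) = x k + (lam k * σ (x k)) • (T (x k) - x k))
    (z : H) (hz : ∀ t, U t z = z) (k : ℕ) :
    ‖x (k+1) - z‖^2 + ε^2 * (∑ t, ω t * ‖U t (x k) - x k‖^2) ≤ ‖x k - z‖^2 := by
  obtain ⟨hε0, hε12⟩ := hε
  obtain ⟨hlam1, hlam2⟩ := hlam k
  -- nonstrict quasi-nonexpansiveness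
  have hqne : ∀ t (w : H), ‖U t w - z‖ ≤ ‖w - z‖ := by
    intro t w
    by_cases h : U t w = w
    · rw [h]
    · exact le_of_lt (hsqne t w h z (hz t))
  -- key identity : T w - w = ∑ ω t • (U t w - w)
  have hTid : ∀ w : H, T w - w = ∑ t, ω t • (U t w - w) := by
    intro w
    calc T w - w = (∑ t, ω t • U t w) - (∑ t, ω t • w) := by
          rw [hT, ← Finset.sum_smul, hωsum, one_smul]
    _ = ∑ t, (ω t • U t w - ω t • w) := (Finset.sum_sub_distrib _ _).symm
    _ = ∑ t, ω t • (U t w - w) := Finset.sum_congr rfl fun t _ => (smul_sub _ _ _).symm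
  -- inner product inequality : ⟪w - z, U t w - w⟫ ≤ -‖U t w - w‖²/2
  have hip : ∀ t (w : H), ⟪w - z, U t w - w⟫ ≤ -(‖U t w - w‖^2/2) := by
    intro t w
    have h1 : ‖U t w - z‖^2 ≤ ‖w - z‖^2 :=
      pow_le_pow_left₀ (norm_nonneg _) (hqne t w) 2
    have h2 : U t w - z = (w - z) + (U t w - w) := by abel
    rw [h2, norm_add_sq_real] at h1
    nlinarith [sq_nonneg ‖U t w - w‖]
  by_cases hTx : T (x k) = x k
  · -- all fixed; step is trivial
    have hUx : ∀ t, U t (x k) = x k := by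
      by_contra h
      push_neg at h
      obtain ⟨s, hs⟩ := h
      have hlt : ∑ t, ω t * ‖U t (x k) - z‖ < ∑ t, ω t * ‖x k - z‖ := by
        refine Finset.sum_lt_sum (fun t _ => ?_) ⟨s, Finset.mem_univ s, ?_⟩
        · exact mul_le_mul_of_nonneg_left (hqne t (x k)) (le_of_lt (hω t))
        · exact mul_lt_mul_of_pos_left (hsqne s (x k) hs z (hz s)) (hω s)
      have hle : ‖x k - z‖ ≤ ∑ t, ω t * ‖U t (x k) - z‖ := by
        have e1 : x k - z = ∑ t, ω t • (U t (x k) - z) := by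
          have hzid : (z : H) = ∑ t, ω t • z := by
            rw [← Finset.sum_smul, hωsum, one_smul]
          calc x k - z = T (x k) - z := by rw [hTx]
          _ = ∑ t, ω t • U t (x k) - ∑ t, ω t • z := by rw [hT, ← hzid]
          _ = ∑ t, ω t • (U t (x k) - z) := by
              rw [← Finset.sum_sub_distrib]
              exact Finset.sum_congr rfl fun t _ => (smul_sub _ _ _).symm
        calc ‖x k - z‖ = ‖∑ t, ω t • (U t (x k) - z)‖ := by rw [← e1]
        _ ≤ ∑ t, ‖ω t • (U t (x k) - z)‖ := norm_sum_le _ _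
        _ = ∑ t, ω t * ‖U t (x k) - z‖ := by
            refine Finset.sum_congr rfl fun t _ => ?_
            rw [norm_smul, Real.norm_eq_abs, abs_of_nonneg (le_of_lt (hω t))]
      have heq : ∑ t, ω t * ‖x k - z‖ = ‖x k - z‖ := by
        rw [← Finset.sum_mul, hωsum, one_mul]
      linarith
    have hS0 : (∑ t, ω t * ‖U t (x k) - x k‖^2) = 0 := by
      refine Finset.sum_eq_zero fun t _ => ?_
      rw [hUx t, sub_self, norm_zero]
      ring
    have hxk : x (k+1) = x k := by
      rw [hx k, hTx, sub_self, smul_zero, add_zero]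
    rw [hxk, hS0, mul_zero, add_zero]
  · -- nontrivial step
    set S := ∑ t, ω t * ‖U t (x k) - x k‖^2 with hS
    set N := ‖T (x k) - x k‖^2 with hN
    have hN0 : 0 < N := by
      apply pow_pos
      rw [norm_pos_iff, sub_ne_zero]
      exact hTx
    have hNS : N ≤ S := by
      rw [hN, hTid (x k)]
      exact wc_jensen ω (fun t => le_of_lt (hω t)) hωsum _
    have hS0 : 0 < S := lt_of_lt_of_le hN0 hNS
    have hσx : σ (x k) = S / N := hσ1 (x k) hTx
    set c := lam k * σ (x k) with hc
    have hlam0 : 0 < lam k := lt_of_lt_of_le hε0 hlam1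
    have hc0 : 0 < c := by
      rw [hc, hσx]
      exact mul_pos hlam0 (div_pos hS0 hN0)
    have hcN : c * N = lam k * S := by
      rw [hc, hσx]
      field_simp
    -- inner product bound
    have hipT : ⟪x k - z, T (x k) - x k⟫ ≤ -(S/2) := by
      rw [hTid (x k)]
      rw [inner_sum]
      have : ∀ t : Fin E, ⟪x k - z, ω t • (U t (x k) - x k)⟫ ≤ ω t * (-(‖U t (x k) - x k‖^2/2)) := by
        intro t
        rw [real_inner_smul_right]
        exact mul_le_mul_of_nonneg_left (hip t (x k)) (le_of_lt (hω t))
      calc (∑ t, ⟪x k - z, ω t • (U t (x k) - x k)⟫)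
          ≤ ∑ t, ω t * (-(‖U t (x k) - x k‖^2/2)) := Finset.sum_le_sum fun t _ => this t
      _ = -(S/2) := by
          rw [hS]
          simp only [mul_neg, ← mul_div_assoc]
          rw [Finset.sum_neg_distrib, Finset.sum_div]
    -- expansion of the step
    have hexp : ‖x (k+1) - z‖^2 = ‖x k - z‖^2 + 2*(c * ⟪x k - z, T (x k) - x k⟫) + c^2 * N := by
      rw [hx k]
      have : x k + c • (T (x k) - x k) - z = (x k - z) + c • (T (x k) - x k) := by abel
      rw [this, norm_add_sq_real, real_inner_smul_right, norm_smul, Real.norm_eq_abs, mul_pow, sq_abs, hN]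
    rw [hexp]
    have h2c : 2*(c * ⟪x k - z, T (x k) - x k⟫) ≤ 2*(c * (-(S/2))) := by
      apply mul_le_mul_of_nonneg_left _ (by norm_num)
      exact mul_le_mul_of_nonneg_left hipT (le_of_lt hc0)
    have hll : ε^2 ≤ lam k * (1 - lam k) := by nlinarith
    -- final : c²N - cS + ε²S ≤ 0
    have hfinal : c^2 * N + ε^2 * S ≤ c * S := by
      have h1 : c * (c * N) = c * (lam k * S) := by rw [hcN]
      have hcS : N * c ≤ S * c := mul_le_mul_of_nonneg_right hNS (le_of_lt hc0)
      -- c * N = lam k * S, so c = lam k * S / N ≥ lam k (since S ≥ N)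
      have hclam : lam k ≤ c := by
        rw [hc, hσx]
        exact le_mul_of_one_le_right (le_of_lt hlam0) ((one_le_div hN0).mpr hNS)
      nlinarith [mul_pos hc0 hS0, sq_nonneg c]
    nlinarith

lemma wc_weak_subseq {H : Type*} [NormedAddCommGroup H] [InnerProductSpace ℝ H]
    [CompleteSpace H] (y : ℕ → H) (M : ℝ) (hM : ∀ k, ‖y k‖ ≤ M) :
    ∃ (φ : ℕ → ℕ) (p : H), StrictMono φ ∧
      ∀ f : H →L[ℝ] ℝ, Tendsto (fun n => f (y (φ n))) atTop (nhds (f p)) := by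
  have hM0 : 0 ≤ M := le_trans (norm_nonneg _) (hM 0)
  -- the gram sequence
  set F : ℕ → (ℕ → ℝ) := fun k j => ⟪y j, y k⟫ with hF
  have hFmem : ∀ k, F k ∈ Set.univ.pi (fun _ : ℕ => Set.Icc (-(M*M)) (M*M)) := by
    intro k j _
    have h1 : |⟪y j, y k⟫| ≤ M * M := by
      calc |⟪y j, y k⟫| ≤ ‖y j‖ * ‖y k‖ := abs_real_inner_le_norm _ _
      _ ≤ M * M := mul_le_mul (hM j) (hM k) (norm_nonneg _) hM0
    exact abs_le.mp h1
  have hcomp : IsCompact (Set.univ.pi (fun _ : ℕ => Set.Icc (-(M*M)) (M*M))) :=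
    isCompact_univ_pi (fun _ => isCompact_Icc)
  obtain ⟨g, -, φ, hφ, hconv⟩ := hcomp.tendsto_subseq hFmem
  have hgj : ∀ j, Tendsto (fun n => ⟪y j, y (φ n)⟫) atTop (nhds (g j)) := by
    intro j
    exact (tendsto_pi_nhds.mp hconv) j
  -- every vector in the span has converging inner products
  have hspan : ∀ v ∈ Submodule.span ℝ (Set.range y),
      ∃ c, Tendsto (fun n => ⟪v, y (φ n)⟫) atTop (nhds c) := by
    intro v hv
    induction hv using Submodule.span_induction with
    | mem w hw =>
        obtain ⟨j, rfl⟩ := hw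
        exact ⟨g j, hgj j⟩
    | zero =>
        exact ⟨0, by simp [inner_zero_left, tendsto_const_nhds]⟩
    | add a b _ _ ha hb =>
        obtain ⟨ca, hca⟩ := ha
        obtain ⟨cb, hcb⟩ := hb
        exact ⟨ca + cb, by simpa [inner_add_left] using hca.add hcb⟩
    | smul r a _ ha =>
        obtain ⟨ca, hca⟩ := ha
        exact ⟨r * ca, by simpa [real_inner_smul_left] using hca.const_mul r⟩
  -- extend to the closure by a Cauchy argument
  have hclos : ∀ v ∈ closure (Submodule.span ℝ (Set.range y) : Set H),
      ∃ c, Tendsto (fun n => ⟪v, y (φ n)⟫) atTop (nhds c) := by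
    intro v hv
    have hcauchy : CauchySeq (fun n => ⟪v, y (φ n)⟫) := by
      rw [Metric.cauchySeq_iff]
      intro δ hδ
      obtain ⟨v', hv'mem, hv'close⟩ := Metric.mem_closure_iff.mp hv (δ / (8 * (M+1)))
        (by positivity)
      obtain ⟨c, hc⟩ := hspan v' hv'mem
      obtain ⟨N, hN⟩ := Metric.cauchySeq_iff'.mp hc.cauchySeq (δ/4) (by positivity)
      refine ⟨N, fun m hm n hn => ?_⟩
      have key : ∀ i : ℕ, |⟪v, y (φ i)⟫ - ⟪v', y (φ i)⟫| ≤ δ/8 := by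
        intro i
        have h1 : ⟪v, y (φ i)⟫ - ⟪v', y (φ i)⟫ = ⟪v - v', y (φ i)⟫ := by
          rw [inner_sub_left]
        rw [h1]
        calc |⟪v - v', y (φ i)⟫| ≤ ‖v - v'‖ * ‖y (φ i)‖ := abs_real_inner_le_norm _ _
        _ ≤ (δ / (8 * (M+1))) * (M+1) := by
            apply mul_le_mul _ _ (norm_nonneg _) (by positivity)
            · rw [← dist_eq_norm]; exact le_of_lt hv'close
            · exact le_trans (hM _) (by linarith)
        _ = δ/8 := by field_simp
      have h2 := hN m hm
      have h3 := hN n hn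
      rw [Real.dist_eq] at h2 h3 ⊢
      have k1 := key m
      have k2 := key n
      have htri : |⟪v, y (φ m)⟫ - ⟪v, y (φ n)⟫| ≤
          |⟪v, y (φ m)⟫ - ⟪v', y (φ m)⟫| + |⟪v', y (φ m)⟫ - ⟪v', y (φ N)⟫|
          + |⟪v', y (φ n)⟫ - ⟪v', y (φ N)⟫| + |⟪v, y (φ n)⟫ - ⟪v', y (φ n)⟫| := by
        have e : ⟪v, y (φ m)⟫ - ⟪v, y (φ n)⟫ =
            (⟪v, y (φ m)⟫ - ⟪v', y (φ m)⟫) + (⟪v', y (φ m)⟫ - ⟪v', y (φ N)⟫)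
            - (⟪v', y (φ n)⟫ - ⟪v', y (φ N)⟫) - (⟪v, y (φ n)⟫ - ⟪v', y (φ n)⟫) := by ring
        rw [e]
        calc _ ≤ |(⟪v, y (φ m)⟫ - ⟪v', y (φ m)⟫) + (⟪v', y (φ m)⟫ - ⟪v', y (φ N)⟫)
            - (⟪v', y (φ n)⟫ - ⟪v', y (φ N)⟫)| + |⟪v, y (φ n)⟫ - ⟪v', y (φ n)⟫| :=
              abs_sub _ _
        _ ≤ _ := by
            have := abs_sub ((⟪v, y (φ m)⟫ - ⟪v', y (φ m)⟫) + (⟪v', y (φ m)⟫ - ⟪v', y (φ N)⟫))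
              (⟪v', y (φ n)⟫ - ⟪v', y (φ N)⟫)
            have h4 := abs_add_le (⟪v, y (φ m)⟫ - ⟪v', y (φ m)⟫) (⟪v', y (φ m)⟫ - ⟪v', y (φ N)⟫)
            linarith
      linarith
    exact cauchySeq_tendsto_of_complete hcauchy
  -- all vectors : decompose via orthogonal projection onto the closed span
  set K : Submodule ℝ H := (Submodule.span ℝ (Set.range y)).topologicalClosure with hK
  have hall : ∀ v : H, ∃ c, Tendsto (fun n => ⟪v, y (φ n)⟫) atTop (nhds c) := by
    intro v
    obtain ⟨a, ha, b, hb, rfl⟩ := K.exists_add_mem_mem_orthogonal v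
    have hbz : ∀ i, ⟪b, y i⟫ = 0 := by
      intro i
      have : y i ∈ K := by
        apply Submodule.le_topologicalClosure
        exact Submodule.subset_span ⟨i, rfl⟩
      rw [real_inner_comm]
      exact (Submodule.mem_orthogonal K b).mp hb (y i) this
    obtain ⟨c, hc⟩ := hclos a ha
    refine ⟨c, ?_⟩
    have : (fun n => ⟪a + b, y (φ n)⟫) = fun n => ⟪a, y (φ n)⟫ := by
      funext n
      rw [inner_add_left, hbz (φ n), add_zero]
    rw [this]
    exact hc
  -- construct the weak limit via Riesz representation
  choose c hc using hall
  have hlin_add : ∀ v w : H, c (v + w) = c v + c w := by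
    intro v w
    have h1 : Tendsto (fun n => ⟪v + w, y (φ n)⟫) atTop (nhds (c v + c w)) := by
      simpa [inner_add_left] using (hc v).add (hc w)
    exact tendsto_nhds_unique (hc (v + w)) h1
  have hlin_smul : ∀ (r : ℝ) (v : H), c (r • v) = r * c v := by
    intro r v
    have h1 : Tendsto (fun n => ⟪r • v, y (φ n)⟫) atTop (nhds (r * c v)) := by
      simpa [real_inner_smul_left] using (hc v).const_mul r
    exact tendsto_nhds_unique (hc (r • v)) h1
  have hbound : ∀ v : H, |c v| ≤ M * ‖v‖ := by
    intro v
    have h1 : ∀ n, |⟪v, y (φ n)⟫| ≤ M * ‖v‖ := by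
      intro n
      calc |⟪v, y (φ n)⟫| ≤ ‖v‖ * ‖y (φ n)‖ := abs_real_inner_le_norm _ _
      _ ≤ ‖v‖ * M := mul_le_mul_of_nonneg_left (hM _) (norm_nonneg _)
      _ = M * ‖v‖ := mul_comm _ _
    have h2 : Tendsto (fun n => |⟪v, y (φ n)⟫|) atTop (nhds |c v|) := (hc v).abs
    exact le_of_tendsto h2 (Eventually.of_forall h1)
  let L : H →ₗ[ℝ] ℝ :=
    { toFun := c
      map_add' := hlin_add
      map_smul' := hlin_smul }
  let Lc : H →L[ℝ] ℝ := LinearMap.mkContinuous L M (by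
    intro v
    simpa [L, Real.norm_eq_abs] using hbound v)
  set p : H := (InnerProductSpace.toDual ℝ H).symm Lc with hp
  have hpc : ∀ v : H, ⟪p, v⟫ = c v := by
    intro v
    exact InnerProductSpace.toDual_symm_apply
  refine ⟨φ, p, hφ, fun f => ?_⟩
  set v : H := (InnerProductSpace.toDual ℝ H).symm f with hv
  have hfv : ∀ w : H, f w = ⟪v, w⟫ := by
    intro w
    exact (InnerProductSpace.toDual_symm_apply).symm
  have : (fun n => f (y (φ n))) = fun n => ⟪v, y (φ n)⟫ := by
    funext n; exact hfv _
  rw [this, hfv p]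
  have : ⟪v, p⟫ = c v := by rw [real_inner_comm]; exact hpc v
  rw [this]
  exact hc v

theorem algorithm_weak_convergence
    {H : Type*} [NormedAddCommGroup H] [InnerProductSpace ℝ H] [CompleteSpace H]
    {E : ℕ} (U : Fin E → H → H) (ω : Fin E → ℝ)
    (hω : ∀ t, 0 < ω t) (hωsum : ∑ t, ω t = 1)
    (hC : ∃ z, ∀ t, U t z = z)
    (hsqne : ∀ t x, U t x ≠ x → ∀ z, U t z = z → ‖U t x - z‖ < ‖x - z‖)
    (T : H → H) (hT : ∀ x, T x = ∑ t, ω t • U t x)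
    (σ : H → ℝ)
    (hσ1 : ∀ x, T x ≠ x → σ x = (∑ t, ω t * ‖U t x - x‖^2) / ‖T x - x‖^2)
    (hσ2 : ∀ x, T x = x → σ x = 1)
    (ε : ℝ) (hε : ε ∈ Set.Ioo (0:ℝ) (1/2))
    (lam : ℕ → ℝ) (hlam : ∀ k, lam k ∈ Set.Icc ε (1 - ε))
    (x : ℕ → H)
    (hx : ∀ k, x (k+1) = x k + (lam k * σ (x k)) • (T (x k) - x k))
    (hdemi : ∀ t, ∀ (y : ℕ → H) (p : H),
      (∀ f : H →L[ℝ] ℝ, Filter.Tendsto (fun k => f (y k)) Filter.atTop (nhds (f p))) →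
      Filter.Tendsto (fun k => U t (y k) - y k) Filter.atTop (nhds 0) →
      U t p = p) :
    ∃ p, (∀ t, U t p = p) ∧ T p = p ∧
      (∀ f : H →L[ℝ] ℝ, Filter.Tendsto (fun k => f (x k)) Filter.atTop (nhds (f p))) := by
  obtain ⟨z, hz⟩ := hC
  obtain ⟨hε0, hε12⟩ := hε
  have hstep := fun (w : H) (hw : ∀ t, U t w = w) =>
    wc_fejer_step U ω hω hωsum hsqne T hT σ hσ1 ε ⟨hε0, hε12⟩ lam hlam x hx w hw
  set D : ℕ → ℝ := fun k => ∑ t, ω t * ‖U t (x k) - x k‖^2 with hD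
  have hD0 : ∀ k, 0 ≤ D k := by
    intro k
    exact Finset.sum_nonneg fun t _ => mul_nonneg (le_of_lt (hω t)) (sq_nonneg _)
  -- monotonicity of distances to any fixed point
  have hmono : ∀ (w : H), (∀ t, U t w = w) → Antitone (fun k => ‖x k - w‖^2) := by
    intro w hw
    apply antitone_nat_of_succ_le
    intro k
    have := hstep w hw k
    nlinarith [hD0 k, sq_nonneg ε]
  -- convergence of distances to any fixed point
  have hdist : ∀ (w : H), (∀ t, U t w = w) →
      ∃ L, Tendsto (fun k => ‖x k - w‖^2) atTop (nhds L) := by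
    intro w hw
    refine ⟨⨅ k, ‖x k - w‖^2, tendsto_atTop_ciInf (hmono w hw) ?_⟩
    exact ⟨0, fun r ⟨k, hk⟩ => hk ▸ sq_nonneg _⟩
  -- boundedness
  have hbd2 : ∀ k, ‖x k - z‖^2 ≤ ‖x 0 - z‖^2 := fun k => hmono z hz (Nat.zero_le k)
  have hxbd : ∀ k, ‖x k‖ ≤ ‖x 0 - z‖ + ‖z‖ := by
    intro k
    have h1 : ‖x k - z‖ ≤ ‖x 0 - z‖ := by
      have := hbd2 k
      nlinarith [norm_nonneg (x k - z), norm_nonneg (x 0 - z)]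
    calc ‖x k‖ = ‖(x k - z) + z‖ := by rw [sub_add_cancel]
    _ ≤ ‖x k - z‖ + ‖z‖ := norm_add_le _ _
    _ ≤ ‖x 0 - z‖ + ‖z‖ := by linarith
  -- summability of the residuals
  have hpartial : ∀ n, (∑ k ∈ Finset.range n, ε^2 * D k) + ‖x n - z‖^2 ≤ ‖x 0 - z‖^2 := by
    intro n
    induction n with
    | zero => simp
    | succ n ih =>
        rw [Finset.sum_range_succ]
        have := hstep z hz n
        linarith
  have hsummable : Summable (fun k => ε^2 * D k) := by
    apply summable_of_sum_range_le (c := ‖x 0 - z‖^2)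
      (fun k => mul_nonneg (sq_nonneg ε) (hD0 k))
    intro n
    have := hpartial n
    nlinarith [sq_nonneg ‖x n - z‖]
  have hDto0 : Tendsto D atTop (nhds 0) := by
    have h1 := hsummable.tendsto_atTop_zero
    have h2 : Tendsto (fun k => (ε^2)⁻¹ * (ε^2 * D k)) atTop (nhds ((ε^2)⁻¹ * 0)) :=
      h1.const_mul _
    have h3 : (fun k => (ε^2)⁻¹ * (ε^2 * D k)) = D := by
      funext k
      field_simp
    rw [h3] at h2
    simpa using h2
  -- residual convergence for each operator
  have hU0 : ∀ t, Tendsto (fun k => U t (x k) - x k) atTop (nhds 0) := by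
    intro t
    rw [tendsto_zero_iff_norm_tendsto_zero]
    have h1 : Tendsto (fun k => ‖U t (x k) - x k‖^2) atTop (nhds 0) := by
      have hsq : ∀ k, ω t * ‖U t (x k) - x k‖^2 ≤ D k := by
        intro k
        exact Finset.single_le_sum (f := fun s => ω s * ‖U s (x k) - x k‖^2)
          (fun s _ => mul_nonneg (le_of_lt (hω s)) (sq_nonneg _)) (Finset.mem_univ t)
      have h2 : Tendsto (fun k => ω t * ‖U t (x k) - x k‖^2) atTop (nhds 0) := by
        apply squeeze_zero (fun k => mul_nonneg (le_of_lt (hω t)) (sq_nonneg _)) hsq hDto0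
      have h3 : Tendsto (fun k => (ω t)⁻¹ * (ω t * ‖U t (x k) - x k‖^2)) atTop
          (nhds ((ω t)⁻¹ * 0)) := h2.const_mul _
      have h4 : (fun k => (ω t)⁻¹ * (ω t * ‖U t (x k) - x k‖^2)) =
          fun k => ‖U t (x k) - x k‖^2 := by
        funext k
        rw [← mul_assoc, inv_mul_cancel₀ (ne_of_gt (hω t)), one_mul]
      rw [h4] at h3
      simpa using h3
    have h5 : (fun k => ‖U t (x k) - x k‖) = fun k => Real.sqrt (‖U t (x k) - x k‖^2) := by
      funext k
      rw [Real.sqrt_sq (norm_nonneg _)]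
    rw [h5]
    have := h1.sqrt
    simpa using this
  -- weak cluster point of the full sequence
  set M : ℝ := ‖x 0 - z‖ + ‖z‖ with hM
  obtain ⟨φ, p, hφ, hweakp⟩ := wc_weak_subseq x M hxbd
  have hpfix : ∀ t, U t p = p := by
    intro t
    apply hdemi t (fun n => x (φ n)) p
    · intro f
      exact hweakp f
    · exact (hU0 t).comp hφ.tendsto_atTop
  have hTp : T p = p := by
    rw [hT]
    calc ∑ t, ω t • U t p = ∑ t, ω t • p := by
          exact Finset.sum_congr rfl fun t _ => by rw [hpfix t]
    _ = p := by rw [← Finset.sum_smul, hωsum, one_smul]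
  refine ⟨p, hpfix, hTp, fun f => ?_⟩
  -- convergence of inner products with differences of fixed points
  have hinner_conv : ∀ (w : H), (∀ t, U t w = w) →
      ∃ c0, Tendsto (fun k => ⟪x k, p - w⟫) atTop (nhds c0) := by
    intro w hw
    obtain ⟨Lp, hLp⟩ := hdist p hpfix
    obtain ⟨Lw, hLw⟩ := hdist w hw
    refine ⟨(‖p‖^2 - ‖w‖^2 - (Lp - Lw))/2, ?_⟩
    have hid : (fun k => ⟪x k, p - w⟫) =
        fun k => (‖p‖^2 - ‖w‖^2 - (‖x k - p‖^2 - ‖x k - w‖^2))/2 := by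
      funext k
      rw [norm_sub_sq_real, norm_sub_sq_real, inner_sub_right]
      ring
    rw [hid]
    have h1 : Tendsto (fun k => ‖x k - p‖^2 - ‖x k - w‖^2) atTop (nhds (Lp - Lw)) :=
      hLp.sub hLw
    have h2 := (tendsto_const_nhds (x := ‖p‖^2 - ‖w‖^2) (f := atTop)).sub h1
    exact h2.div_const 2
  -- uniqueness of weak cluster points among fixed points
  have huniq : ∀ (q : H), (∀ t, U t q = q) →
      (∃ ψ : ℕ → ℕ, Tendsto ψ atTop atTop ∧
        ∀ f : H →L[ℝ] ℝ, Tendsto (fun n => f (x (ψ n))) atTop (nhds (f q))) → q = p := by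
    intro q hq ⟨ψ, hψ, hweakq⟩
    obtain ⟨c0, hc0⟩ := hinner_conv q hq
    set f0 : H →L[ℝ] ℝ := InnerProductSpace.toDual ℝ H (p - q) with hf0
    have hf0app : ∀ w : H, f0 w = ⟪p - q, w⟫ := fun w => InnerProductSpace.toDual_apply_apply
    -- along φ
    have ha : Tendsto (fun n => ⟪x (φ n), p - q⟫) atTop (nhds ⟪p - q, p⟫) := by
      have := hweakp f0
      rw [hf0app p] at this
      have heq : (fun n => f0 (x (φ n))) = fun n => ⟪x (φ n), p - q⟫ := by
        funext n
        rw [hf0app, real_inner_comm]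
      rwa [heq] at this
    have hb : Tendsto (fun n => ⟪x (φ n), p - q⟫) atTop (nhds c0) :=
      hc0.comp hφ.tendsto_atTop
    have hcp : c0 = ⟪p - q, p⟫ := tendsto_nhds_unique hb ha
    -- along ψ
    have ha' : Tendsto (fun n => ⟪x (ψ n), p - q⟫) atTop (nhds ⟪p - q, q⟫) := by
      have := hweakq f0
      rw [hf0app q] at this
      have heq : (fun n => f0 (x (ψ n))) = fun n => ⟪x (ψ n), p - q⟫ := by
        funext n
        rw [hf0app, real_inner_comm]
      rwa [heq] at this
    have hb' : Tendsto (fun n => ⟪x (ψ n), p - q⟫) atTop (nhds c0) := hc0.comp hψ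
    have hcq : c0 = ⟪p - q, q⟫ := tendsto_nhds_unique hb' ha'
    have : ⟪p - q, p - q⟫ = 0 := by
      rw [inner_sub_right, ← hcp, ← hcq]
      ring
    have := inner_self_eq_zero.mp this
    rw [sub_eq_zero] at this
    exact this.symm
  -- conclude via the subsequence criterion
  apply Filter.tendsto_of_subseq_tendsto
  intro ns hns
  obtain ⟨ms, q, hms, hweakq⟩ := wc_weak_subseq (fun n => x (ns n)) M (fun k => hxbd _)
  have hqfix : ∀ t, U t q = q := by
    intro t
    apply hdemi t (fun n => x (ns (ms n))) q
    · intro f'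
      exact hweakq f'
    · exact (hU0 t).comp (hns.comp hms.tendsto_atTop)
  have hqp : q = p := by
    apply huniq q hqfix
    exact ⟨fun n => ns (ms n), hns.comp hms.tendsto_atTop, fun f' => hweakq f'⟩
  refine ⟨ms, ?_⟩
  have := hweakq f
  rw [hqp] at this
  exact this
end
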